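/- Let W be an m-dimensional subspace of ℓ∞ and let 𝒜 = {ã₁,…,ã_m} be a basis of W. Then for every β = (β₁,…,β_m) ∈ ℝ^m there exists an element (â₁,…,â_m) ∈ 𝒮̄ satisfying the weak *-Property such that ‖∑_{k=1}^m β_k ã_k‖_∞ = |∑_{k=1}^m β_k â_k|. -/
import Mathlib


open scoped ENNReal

noncomputable section

/-- `ℓ∞`, the space of bounded real sequences with the supremum norm. -/
abbrev Linf : Type := lp (fun _ : ℕ => ℝ) ∞

/-- The `i`-th component of the family `a = {ã₁, …, ã_m}`. -/
def component {m : ℕ} (a : Fin m → Linf) (i : ℕ) : Fin m → ℝ :=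
  fun k => a k i

/-- `𝒮̄`, the closure (in `ℝ^m`) of the set of all components of the family `a`. -/
def SbarSet {m : ℕ} (a : Fin m → Linf) : Set (Fin m → ℝ) :=
  closure (Set.range (component a))

/-- The equivalence class `E_x = {b ∈ 𝒮̄ : b = ±x}`. -/
def EquivClass {m : ℕ} (a : Fin m → Linf) (x : Fin m → ℝ) : Set (Fin m → ℝ) :=
  {b ∈ SbarSet a | b = x ∨ b = -x}

/-- `x ∈ 𝒮̄` satisfies the weak `*`-Property: there is `β ∈ ℝ^m` with
`|∑ β_k x̂_k| ≥ sup {|∑ β_k b̂_k| : b ∈ 𝒮̄ \ E_x}`. -/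
def WeakStarProp {m : ℕ} (a : Fin m → Linf) (x : Fin m → ℝ) : Prop :=
  x ∈ SbarSet a ∧ ∃ β : Fin m → ℝ,
    ∀ b ∈ SbarSet a \ EquivClass a x, |∑ k, β k * b k| ≤ |∑ k, β k * x k|

/-- `x ∈ 𝒮̄` satisfies the `*`-Property: there is `β ∈ ℝ^m` with
`|∑ β_k x̂_k| > |∑ β_k b̂_k|` for every `b ∈ 𝒮̄ \ E_x`. -/
def StarProp {m : ℕ} (a : Fin m → Linf) (x : Fin m → ℝ) : Prop :=
  x ∈ SbarSet a ∧ ∃ β : Fin m → ℝ,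
    ∀ b ∈ SbarSet a \ EquivClass a x, |∑ k, β k * b k| < |∑ k, β k * x k|


/-- if `𝒜 = {ã₁, …, ã_m}` is a basis of an `m`-dimensional subspace of `ℓ∞`,
then for every `β ∈ ℝ^m` there is an element `x ∈ 𝒮̄` satisfying the weak `*`-Property with
`‖∑ β_k ã_k‖∞ = |∑ β_k x̂_k|`. -/
theorem stmt2 (m : ℕ) (a : Fin m → Linf) (ha : LinearIndependent ℝ a)
    (β : Fin m → ℝ) :
    ∃ x : Fin m → ℝ, x ∈ SbarSet a ∧ WeakStarProp a x ∧
      ‖∑ k, β k • a k‖ = |∑ k, β k * x k| := by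
  set f : Linf := ∑ k, β k • a k with hf
  have hfi : ∀ i : ℕ, (f : ℕ → ℝ) i = ∑ k, β k * a k i := by
    intro i
    rw [hf, lp.coeFn_sum]
    simp [lp.coeFn_smul]
  -- continuity of φ
  have hφ : Continuous fun b : Fin m → ℝ => |∑ k, β k * b k| := by
    continuity
  -- range bounded
  have hbdd : ∃ R : ℝ, Set.range (component a) ⊆ Metric.closedBall 0 R := by
    refine ⟨∑ k, ‖a k‖, ?_⟩
    rintro _ ⟨i, rfl⟩
    rw [Metric.mem_closedBall, dist_zero_right]
    refine (pi_norm_le_iff_of_nonneg (Finset.sum_nonneg fun k _ => norm_nonneg _)).2 ?_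
    intro k
    calc ‖component a i k‖ ≤ ‖a k‖ := lp.norm_apply_le_norm ENNReal.top_ne_zero (a k) i
    _ ≤ ∑ j, ‖a j‖ := Finset.single_le_sum (fun j _ => norm_nonneg _) (Finset.mem_univ k)
  obtain ⟨R, hR⟩ := hbdd
  have hcomp : IsCompact (SbarSet a) := by
    have : IsCompact (Metric.closedBall (0 : Fin m → ℝ) R) := isCompact_closedBall 0 R
    exact this.of_isClosed_subset isClosed_closure
      (closure_minimal hR Metric.isClosed_closedBall)
  have hne : (SbarSet a).Nonempty :=
    ⟨component a 0, subset_closure ⟨0, rfl⟩⟩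
  obtain ⟨x, hx, hmax⟩ := hcomp.exists_isMaxOn hne hφ.continuousOn
  refine ⟨x, hx, ⟨hx, β, fun b hb => hmax hb.1⟩, ?_⟩
  -- norm equality
  have hnorm : ‖f‖ = ⨆ i, ‖(f : ℕ → ℝ) i‖ := lp.norm_eq_ciSup f
  have hBddAbove : BddAbove (Set.range fun i => ‖(f : ℕ → ℝ) i‖) := by
    refine ⟨‖f‖, ?_⟩
    rintro _ ⟨i, rfl⟩
    exact lp.norm_apply_le_norm ENNReal.top_ne_zero f i
  have hle1 : (⨆ i, ‖(f : ℕ → ℝ) i‖) ≤ |∑ k, β k * x k| := by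
    refine ciSup_le fun i => ?_
    have : |∑ k, β k * component a i k| ≤ |∑ k, β k * x k| :=
      hmax (subset_closure ⟨i, rfl⟩)
    simpa [hfi i, component, Real.norm_eq_abs] using this
  have hle2 : |∑ k, β k * x k| ≤ ⨆ i, ‖(f : ℕ → ℝ) i‖ := by
    have hclosed : IsClosed {b : Fin m → ℝ | |∑ k, β k * b k| ≤ ⨆ i, ‖(f : ℕ → ℝ) i‖} :=
      isClosed_le hφ continuous_const
    have hsub : Set.range (component a) ⊆
        {b : Fin m → ℝ | |∑ k, β k * b k| ≤ ⨆ i, ‖(f : ℕ → ℝ) i‖} := by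
      rintro _ ⟨i, rfl⟩
      have : ‖(f : ℕ → ℝ) i‖ ≤ ⨆ j, ‖(f : ℕ → ℝ) j‖ := le_ciSup hBddAbove i
      simpa [hfi i, component, Real.norm_eq_abs] using this
    exact closure_minimal hsub hclosed hx
  rw [hnorm]
  exact le_antisymm hle1 hle2
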